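/- Let n ≥ 1 and real numbers M₁ ≥ M₂ ≥ ⋯ ≥ Mₙ ≥ 0, m₁ ≥ ⋯ ≥ m_{n-1} ≥ 0, with M_i ≥ m_{i-1} for 2 ≤ i ≤ n. Then (M₁² + Σ_{i=2}^n (M_i² - m_{i-1}²))^{1/2} ≥ (M₁³ + Σ_{i=2}^n (M_i³ - m_{i-1}³))^{1/3}. -/

import Mathlib

lemma core_cube (Y M m : ℝ) (h0 : 0 ≤ m) (h1 : m ≤ M) (h2 : M ≤ Y) :
    (Y^3 + M^3 - m^3)^2 ≤ (Y^2 + M^2 - m^2)^3 := by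
  obtain ⟨s, hs, rfl⟩ : ∃ s, 0 ≤ s ∧ M = m + s := ⟨M - m, by linarith, by ring⟩
  obtain ⟨t, ht, rfl⟩ : ∃ t, 0 ≤ t ∧ Y = m + s + t := ⟨Y - (m + s), by linarith, by ring⟩
  nlinarith [(mul_nonneg (pow_nonneg hs 2) (pow_nonneg ht 4)), (mul_nonneg (pow_nonneg hs 3) (pow_nonneg ht 3)), (mul_nonneg (pow_nonneg hs 4) (pow_nonneg ht 2)), (mul_nonneg (pow_nonneg hs 5) (pow_nonneg ht 1)), (pow_nonneg hs 6), (mul_nonneg (mul_nonneg (pow_nonneg h0 1) (pow_nonneg hs 1)) (pow_nonneg ht 4)), (mul_nonneg (mul_nonneg (pow_nonneg h0 1) (pow_nonneg hs 2)) (pow_nonneg ht 3)), (mul_nonneg (mul_nonneg (pow_nonneg h0 1) (pow_nonneg hs 3)) (pow_nonneg ht 2)), (mul_nonneg (mul_nonneg (pow_nonneg h0 1) (pow_nonneg hs 4)) (pow_nonneg ht 1)), (mul_nonneg (pow_nonneg h0 1) (pow_nonneg hs 5)), (mul_nonneg (mul_nonneg (pow_nonneg h0 2) (pow_nonneg hs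 1)) (pow_nonneg ht 3)), (mul_nonneg (mul_nonneg (pow_nonneg h0 2) (pow_nonneg hs 2)) (pow_nonneg ht 2)), (mul_nonneg (mul_nonneg (pow_nonneg h0 2) (pow_nonneg hs 3)) (pow_nonneg ht 1)), (mul_nonneg (pow_nonneg h0 2) (pow_nonneg hs 4)), (mul_nonneg (mul_nonneg (pow_nonneg h0 3) (pow_nonneg hs 1)) (pow_nonneg ht 2)), (mul_nonneg (mul_nonneg (pow_nonneg h0 3) (pow_nonneg hs 2)) (pow_nonneg ht 1)), (mul_nonneg (pow_nonneg h0 3) (pow_nonneg hs 3)), (mul_nonneg (mul_nonneg (pow_nonneg h0 4) (pow_nonneg hs 1)) (pow_nonneg ht 1)), (mul_nonneg (pow_nonneg h0 4) (pow_nonneg hs 2))]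

lemma step_cube (A B MM mm : ℝ) (hB0 : 0 ≤ B) (hAB : B ^ 2 ≤ A ^ 3)
    (hm : 0 ≤ mm) (hMm : mm ≤ MM) (hBM : MM ^ 3 ≤ B) :
    (B + MM ^ 3 - mm ^ 3) ^ 2 ≤ (A + MM ^ 2 - mm ^ 2) ^ 3 := by
  set Y := B ^ ((1:ℝ)/3) with hYdef
  have hY0 : 0 ≤ Y := Real.rpow_nonneg hB0 _
  have hY3 : Y ^ 3 = B := by
    rw [hYdef, ← Real.rpow_natCast (B ^ ((1:ℝ)/3)) 3, ← Real.rpow_mul hB0]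
    norm_num
  have hA0 : 0 ≤ A := by
    have h3 : 0 ≤ A ^ 3 := le_trans (sq_nonneg B) hAB
    exact (Odd.pow_nonneg_iff (by decide : Odd 3)).mp h3
  have hYM : MM ≤ Y := by
    have h3 : MM ^ 3 ≤ Y ^ 3 := by rw [hY3]; exact hBM
    exact le_of_pow_le_pow_left₀ (by norm_num) hY0 h3
  have hAY : Y ^ 2 ≤ A := by
    have h1 : (Y ^ 2) ^ 3 ≤ A ^ 3 := by
      calc (Y ^ 2) ^ 3 = (Y ^ 3) ^ 2 := by ring
        _ = B ^ 2 := by rw [hY3]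
        _ ≤ A ^ 3 := hAB
    exact le_of_pow_le_pow_left₀ (by norm_num) hA0 h1
  have hcore := core_cube Y MM mm hm hMm hYM
  calc (B + MM ^ 3 - mm ^ 3) ^ 2
      = (Y ^ 3 + MM ^ 3 - mm ^ 3) ^ 2 := by rw [hY3]
    _ ≤ (Y ^ 2 + MM ^ 2 - mm ^ 2) ^ 3 := hcore
    _ ≤ (A + MM ^ 2 - mm ^ 2) ^ 3 := by
        apply pow_le_pow_left₀ (by nlinarith [sq_nonneg Y]) (by linarith)

lemma aux_cube (M m : ℕ → ℝ) : ∀ n, 1 ≤ n →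
    (∀ i, 1 ≤ i → i < n → M (i + 1) ≤ M i) → 0 ≤ M n →
    (∀ i, 1 ≤ i → i < n → 0 ≤ m i) →
    (∀ i, 2 ≤ i → i ≤ n → m (i - 1) ≤ M i) →
    0 ≤ (M 1 ^ 3 + ∑ i ∈ Finset.Icc 2 n, (M i ^ 3 - m (i - 1) ^ 3)) ∧
    M n ^ 3 ≤ (M 1 ^ 3 + ∑ i ∈ Finset.Icc 2 n, (M i ^ 3 - m (i - 1) ^ 3)) ∧
    (M 1 ^ 3 + ∑ i ∈ Finset.Icc 2 n, (M i ^ 3 - m (i - 1) ^ 3)) ^ 2 ≤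
      (M 1 ^ 2 + ∑ i ∈ Finset.Icc 2 n, (M i ^ 2 - m (i - 1) ^ 2)) ^ 3 := by
  intro n hn
  induction n, hn using Nat.le_induction with
  | base =>
    intro _ hM1 _ _
    rw [show Finset.Icc 2 1 = ∅ from Finset.Icc_eq_empty (by omega)]
    simp only [Finset.sum_empty, add_zero]
    refine ⟨by positivity, le_refl _, by nlinarith⟩
  | succ n hn ih =>
    intro hM hMn hm0 hMm
    have hM' : ∀ i, 1 ≤ i → i < n → M (i + 1) ≤ M i := fun i h1 h2 => hM i h1 (by omega)
    have hstepM : M (n + 1) ≤ M n := hM n hn (by omega)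
    have hMn' : 0 ≤ M n := hMn.trans hstepM
    have hm0' : ∀ i, 1 ≤ i → i < n → 0 ≤ m i := fun i h1 h2 => hm0 i h1 (by omega)
    have hMm' : ∀ i, 2 ≤ i → i ≤ n → m (i - 1) ≤ M i := fun i h1 h2 => hMm i h1 (by omega)
    obtain ⟨hB0, hBM, hAB⟩ := ih hM' hMn' hm0' hMm'
    have hsum3 : (M 1 ^ 3 + ∑ i ∈ Finset.Icc 2 (n+1), (M i ^ 3 - m (i - 1) ^ 3)) =
        (M 1 ^ 3 + ∑ i ∈ Finset.Icc 2 n, (M i ^ 3 - m (i - 1) ^ 3)) + (M (n+1) ^ 3 - m n ^ 3) := by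
      rw [Finset.sum_Icc_succ_top (by omega : 2 ≤ n + 1)]
      simp only [Nat.add_sub_cancel]
      ring
    have hsum2 : (M 1 ^ 2 + ∑ i ∈ Finset.Icc 2 (n+1), (M i ^ 2 - m (i - 1) ^ 2)) =
        (M 1 ^ 2 + ∑ i ∈ Finset.Icc 2 n, (M i ^ 2 - m (i - 1) ^ 2)) + (M (n+1) ^ 2 - m n ^ 2) := by
      rw [Finset.sum_Icc_succ_top (by omega : 2 ≤ n + 1)]
      simp only [Nat.add_sub_cancel]
      ring
    have hmn0 : 0 ≤ m n := hm0 n hn (by omega)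
    have hmMn : m n ≤ M (n + 1) := by
      have := hMm (n + 1) (by omega) (le_refl _)
      simpa using this
    have hM1n3 : M (n+1) ^ 3 ≤ M n ^ 3 := pow_le_pow_left₀ hMn hstepM 3
    have hBM1 : M (n+1) ^ 3 ≤ (M 1 ^ 3 + ∑ i ∈ Finset.Icc 2 n, (M i ^ 3 - m (i - 1) ^ 3)) :=
      hM1n3.trans hBM
    have hmn3 : m n ^ 3 ≤ M (n+1) ^ 3 := pow_le_pow_left₀ hmn0 hmMn 3
    rw [hsum3, hsum2]
    refine ⟨by linarith, by linarith, ?_⟩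
    have hst := step_cube (M 1 ^ 2 + ∑ i ∈ Finset.Icc 2 n, (M i ^ 2 - m (i - 1) ^ 2))
      (M 1 ^ 3 + ∑ i ∈ Finset.Icc 2 n, (M i ^ 3 - m (i - 1) ^ 3))
      (M (n+1)) (m n) hB0 hAB hmn0 hmMn hBM1
    calc ((M 1 ^ 3 + ∑ i ∈ Finset.Icc 2 n, (M i ^ 3 - m (i - 1) ^ 3)) + (M (n+1) ^ 3 - m n ^ 3)) ^ 2
        = ((M 1 ^ 3 + ∑ i ∈ Finset.Icc 2 n, (M i ^ 3 - m (i - 1) ^ 3)) + M (n+1) ^ 3 - m n ^ 3) ^ 2 := by ring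
      _ ≤ ((M 1 ^ 2 + ∑ i ∈ Finset.Icc 2 n, (M i ^ 2 - m (i - 1) ^ 2)) + M (n+1) ^ 2 - m n ^ 2) ^ 3 := hst
      _ = ((M 1 ^ 2 + ∑ i ∈ Finset.Icc 2 n, (M i ^ 2 - m (i - 1) ^ 2)) + (M (n+1) ^ 2 - m n ^ 2)) ^ 3 := by ring

theorem An_ge_Bn (n : ℕ) (hn : 1 ≤ n) (M m : ℕ → ℝ)
    (hM : ∀ i, 1 ≤ i → i < n → M (i + 1) ≤ M i) (hMn : 0 ≤ M n)
    (hm : ∀ i, 1 ≤ i → i < n - 1 → m (i + 1) ≤ m i) (hmn : 0 ≤ m (n - 1))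
    (hMm : ∀ i, 2 ≤ i → i ≤ n → m (i - 1) ≤ M i) :
    Real.sqrt (M 1 ^ 2 + ∑ i ∈ Finset.Icc 2 n, (M i ^ 2 - m (i - 1) ^ 2)) ≥
      (M 1 ^ 3 + ∑ i ∈ Finset.Icc 2 n, (M i ^ 3 - m (i - 1) ^ 3)) ^ ((1:ℝ)/3) := by
  have key : ∀ d i, 1 ≤ i → i + d = n - 1 → 0 ≤ m i := by
    intro d
    induction d with
    | zero =>
      intro i h1 h2
      have hi : i = n - 1 := by omega
      rw [hi]
      exact hmn
    | succ d ihd =>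
      intro i h1 h2
      have h3 : 0 ≤ m (i + 1) := ihd (i + 1) (by omega) (by omega)
      have h4 : m (i + 1) ≤ m i := hm i h1 (by omega)
      linarith
  have hm0 : ∀ i, 1 ≤ i → i < n → 0 ≤ m i := fun i h1 h2 => key (n - 1 - i) i h1 (by omega)
  obtain ⟨hB0, _, hAB⟩ := aux_cube M m n hn hM hMn hm0 hMm
  set A := M 1 ^ 2 + ∑ i ∈ Finset.Icc 2 n, (M i ^ 2 - m (i - 1) ^ 2) with hA
  set B := M 1 ^ 3 + ∑ i ∈ Finset.Icc 2 n, (M i ^ 3 - m (i - 1) ^ 3) with hB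
  have hA0 : 0 ≤ A := by
    have h3 : 0 ≤ A ^ 3 := le_trans (sq_nonneg B) hAB
    exact (Odd.pow_nonneg_iff (by decide : Odd 3)).mp h3
  have h6 : (B ^ ((1:ℝ)/3)) ^ 6 ≤ (Real.sqrt A) ^ 6 := by
    have l : (B ^ ((1:ℝ)/3)) ^ 6 = B ^ 2 := by
      rw [← Real.rpow_natCast (B ^ ((1:ℝ)/3)) 6, ← Real.rpow_mul hB0]
      norm_num
    have r : (Real.sqrt A) ^ 6 = A ^ 3 := by
      rw [show (6 = 2 * 3) from rfl, pow_mul, Real.sq_sqrt hA0]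
    rw [l, r]
    exact hAB
  exact le_of_pow_le_pow_left₀ (by norm_num) (Real.sqrt_nonneg _) h6
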